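/- Strict Elimination: The reduction relation ⇒_S induced by strict dominance (by pure strategies) on restrictions of a finite strategic game satisfies the unique normal form property, and its transitive closure equals that of the single-strategy elimination relation ⇒_{1,S}. -/

import Mathlib

/-- In the restriction with strategy sets `T`, strategy `s` of player `i` is strictly
dominated by `s'`. -/
def StrictDom {n : ℕ} {S : Fin n → Type*} (p : Fin n → (∀ i, S i) → ℝ)
    (T : ∀ i, Finset (S i)) (i : Fin n) (s s' : S i) : Prop :=
  ∀ σ : ∀ j, S j, (∀ j, σ j ∈ T j) →
    p i (Function.update σ i s) < p i (Function.update σ i s')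

/-- The reduction `G ⇒_S G'` by strict dominance between restrictions of a finite game. -/
def StrictRed {n : ℕ} {S : Fin n → Type*} (p : Fin n → (∀ i, S i) → ℝ)
    (T T' : ∀ i, Finset (S i)) : Prop :=
  T ≠ T' ∧ (∀ i, T' i ⊆ T i) ∧
    (∀ i, ∀ s ∈ T i, s ∉ T' i → ∃ s' ∈ T' i, StrictDom p T i s s')

section Aux

variable {n : ℕ} {S : Fin n → Type*} [∀ i, Fintype (S i)] [∀ i, DecidableEq (S i)]
  (p : Fin n → (∀ i, S i) → ℝ)

lemma strictDom_mono {T U : ∀ i, Finset (S i)} (hUT : ∀ i, U i ⊆ T i) {i : Fin n}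
    {s s' : S i} (h : StrictDom p T i s s') : StrictDom p U i s s' :=
  fun σ hσ => h σ (fun j => hUT j (hσ j))

lemma strictDom_trans {T : ∀ i, Finset (S i)} {i : Fin n} {a b c : S i}
    (h1 : StrictDom p T i a b) (h2 : StrictDom p T i b c) : StrictDom p T i a c :=
  fun σ hσ => (h1 σ hσ).trans (h2 σ hσ)

lemma strictDom_irrefl {T : ∀ i, Finset (S i)} (hne : ∀ j, (T j).Nonempty) {i : Fin n}
    {a : S i} : ¬ StrictDom p T i a a := by
  intro h
  exact lt_irrefl _ (h (fun j => (hne j).choose) (fun j => (hne j).choose_spec))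

lemma red_subset {T T' : ∀ i, Finset (S i)} (h : StrictRed p T T') : ∀ i, T' i ⊆ T i := h.2.1

lemma red_nonempty {T T' : ∀ i, Finset (S i)} (h : StrictRed p T T')
    (hne : ∀ i, (T i).Nonempty) : ∀ i, (T' i).Nonempty := by
  intro i
  obtain ⟨s, hs⟩ := hne i
  by_cases hs' : s ∈ T' i
  · exact ⟨s, hs'⟩
  · obtain ⟨t, ht, -⟩ := h.2.2 i s hs hs'
    exact ⟨t, ht⟩

lemma red_sum_lt {T T' : ∀ i, Finset (S i)} (h : StrictRed p T T') :
    (∑ i, (T' i).card) < ∑ i, (T i).card := by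
  have hne : ∃ i, T' i ≠ T i := by
    by_contra hc
    push_neg at hc
    exact h.1 (funext fun i => (hc i).symm)
  obtain ⟨i, hi⟩ := hne
  refine Finset.sum_lt_sum (fun j _ => Finset.card_le_card (h.2.1 j)) ⟨i, Finset.mem_univ i, ?_⟩
  exact Finset.card_lt_card (lt_of_le_of_ne (h.2.1 i) hi)

/-- Chain lemma: if `s'` survives in `T₁` or `T₂`, there is a common survivor `t`
dominating (or equal to) `s'` in `T`. -/
lemma chain {T T₁ T₂ : ∀ i, Finset (S i)} (hne : ∀ j, (T j).Nonempty)
    (h1 : StrictRed p T T₁) (h2 : StrictRed p T T₂) (i : Fin n) :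
    ∀ s' : S i, (s' ∈ T₁ i ∨ s' ∈ T₂ i) →
      ∃ t, t ∈ T₁ i ∧ t ∈ T₂ i ∧ (s' = t ∨ StrictDom p T i s' t) := by
  have hwf : WellFounded (fun a b : S i => StrictDom p T i b a) := by
    have ht : IsTrans (S i) (fun a b : S i => StrictDom p T i b a) :=
      ⟨fun a b c hab hbc => strictDom_trans p hbc hab⟩
    have hi : IsIrrefl (S i) (fun a b : S i => StrictDom p T i b a) :=
      ⟨fun a h => strictDom_irrefl p hne h⟩
    exact Finite.wellFounded_of_trans_of_irrefl _
  intro s'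
  induction s' using WellFounded.induction hwf with
  | _ s' ih =>
    intro hs'
    by_cases h1m : s' ∈ T₁ i
    · by_cases h2m : s' ∈ T₂ i
      · exact ⟨s', h1m, h2m, Or.inl rfl⟩
      · obtain ⟨s'', hs''2, hdom⟩ := h2.2.2 i s' (h1.2.1 i h1m) h2m
        obtain ⟨t, ht1, ht2, hts⟩ := ih s'' hdom (Or.inr hs''2)
        refine ⟨t, ht1, ht2, Or.inr ?_⟩
        rcases hts with rfl | hd
        · exact hdom
        · exact strictDom_trans p hdom hd
    · have h2m : s' ∈ T₂ i := hs'.resolve_left h1m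
      obtain ⟨s'', hs''1, hdom⟩ := h1.2.2 i s' (h2.2.1 i h2m) h1m
      obtain ⟨t, ht1, ht2, hts⟩ := ih s'' hdom (Or.inl hs''1)
      refine ⟨t, ht1, ht2, Or.inr ?_⟩
      rcases hts with rfl | hd
      · exact hdom
      · exact strictDom_trans p hdom hd

/-- Diamond property. -/
lemma diamond {T T₁ T₂ : ∀ i, Finset (S i)} (hne : ∀ j, (T j).Nonempty)
    (h1 : StrictRed p T T₁) (h2 : StrictRed p T T₂) :
    ∃ T₃, Relation.ReflTransGen (StrictRed p) T₁ T₃ ∧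
      Relation.ReflTransGen (StrictRed p) T₂ T₃ := by
  set T₃ : ∀ i, Finset (S i) := fun i => T₁ i ∩ T₂ i with hT₃
  have key : ∀ (A B : ∀ i, Finset (S i)), StrictRed p T A → StrictRed p T B →
      (∀ i, A i ∩ B i ⊆ A i) → A = (fun i => A i ∩ B i) ∨
        StrictRed p A (fun i => A i ∩ B i) := by
    intro A B hA hB hsub
    by_cases heq : A = fun i => A i ∩ B i
    · exact Or.inl heq
    · refine Or.inr ⟨heq, hsub, ?_⟩
      intro i s hsA hsN
      have hsB : s ∉ B i := fun hb => hsN (Finset.mem_inter.2 ⟨hsA, hb⟩)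
      obtain ⟨s', hs'B, hdom⟩ := hB.2.2 i s (hA.2.1 i hsA) hsB
      obtain ⟨t, htA, htB, hts⟩ := chain p hne hA hB i s' (Or.inr hs'B)
      refine ⟨t, Finset.mem_inter.2 ⟨htA, htB⟩, ?_⟩
      have hdt : StrictDom p T i s t := by
        rcases hts with rfl | hd
        · exact hdom
        · exact strictDom_trans p hdom hd
      exact strictDom_mono p hA.2.1 hdt
  have k1 := key T₁ T₂ h1 h2 (fun i => Finset.inter_subset_left)
  have k2' := key T₂ T₁ h2 h1 (fun i => Finset.inter_subset_left)
  have hcomm : (fun i => T₂ i ∩ T₁ i) = T₃ := by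
    funext i; exact Finset.inter_comm _ _
  rw [hcomm] at k2'
  refine ⟨T₃, ?_, ?_⟩
  · rcases k1 with heq | hred
    · exact heq ▸ Relation.ReflTransGen.refl
    · exact Relation.ReflTransGen.single hred
  · rcases k2' with heq | hred
    · exact heq ▸ Relation.ReflTransGen.refl
    · exact Relation.ReflTransGen.single hred

/-- Confluence, by induction on the total number of strategies. -/
lemma confluence : ∀ (N : ℕ) (T U V : ∀ i, Finset (S i)), (∀ i, (T i).Nonempty) →
    (∑ i, (T i).card) ≤ N →
    Relation.ReflTransGen (StrictRed p) T U → Relation.ReflTransGen (StrictRed p) T V →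
    ∃ W, Relation.ReflTransGen (StrictRed p) U W ∧
      Relation.ReflTransGen (StrictRed p) V W := by
  intro N
  induction N with
  | zero =>
    intro T U V hne hle hU hV
    rcases hU.cases_head with rfl | ⟨T₁, h1, -⟩
    · exact ⟨V, hV, Relation.ReflTransGen.refl⟩
    · exact absurd (lt_of_lt_of_le (red_sum_lt p h1) hle) (Nat.not_lt_zero _)
  | succ N ihN =>
    intro T U V hne hle hU hV
    rcases hU.cases_head with rfl | ⟨T₁, h1, hU1⟩
    · exact ⟨V, hV, Relation.ReflTransGen.refl⟩
    rcases hV.cases_head with rfl | ⟨T₂, h2, hV2⟩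
    · exact ⟨U, Relation.ReflTransGen.refl, hU⟩
    obtain ⟨T₃, h13, h23⟩ := diamond p hne h1 h2
    have hle1 : (∑ i, (T₁ i).card) ≤ N := by
      have := red_sum_lt p h1; omega
    have hle2 : (∑ i, (T₂ i).card) ≤ N := by
      have := red_sum_lt p h2; omega
    obtain ⟨W₁, hUW₁, h3W₁⟩ := ihN T₁ U T₃ (red_nonempty p h1 hne) hle1 hU1 h13
    obtain ⟨W, hVW, hW₁W⟩ := ihN T₂ V W₁ (red_nonempty p h2 hne) hle2 hV2 (h23.trans h3W₁)
    exact ⟨W, hUW₁.trans hW₁W, hVW⟩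

lemma exists_nf : ∀ (N : ℕ) (T : ∀ i, Finset (S i)), (∑ i, (T i).card) ≤ N →
    ∃ T', Relation.ReflTransGen (StrictRed p) T T' ∧
      ∀ T'', ¬ StrictRed p T' T'' := by
  intro N
  induction N with
  | zero =>
    intro T hle
    refine ⟨T, Relation.ReflTransGen.refl, fun T'' h => ?_⟩
    exact absurd (lt_of_lt_of_le (red_sum_lt p h) hle) (Nat.not_lt_zero _)
  | succ N ihN =>
    intro T hle
    by_cases hnf : ∀ T'', ¬ StrictRed p T T''
    · exact ⟨T, Relation.ReflTransGen.refl, hnf⟩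
    · push_neg at hnf
      obtain ⟨T₁, h1⟩ := hnf
      have hle1 : (∑ i, (T₁ i).card) ≤ N := by
        have := red_sum_lt p h1; omega
      obtain ⟨T', hT', hnf'⟩ := ihN T₁ hle1
      exact ⟨T', Relation.ReflTransGen.head h1 hT', hnf'⟩

lemma nf_rtg_eq {U W : ∀ i, Finset (S i)} (hnf : ∀ T'', ¬ StrictRed p U T'')
    (h : Relation.ReflTransGen (StrictRed p) U W) : U = W := by
  rcases h.cases_head with rfl | ⟨X, hX, -⟩
  · rfl
  · exact absurd hX (hnf X)

/-- Any single reduction step decomposes into one-at-a-time steps. -/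
lemma step_transgen : ∀ (N : ℕ) (T T' : ∀ i, Finset (S i)), (∑ i, (T i).card) ≤ N →
    StrictRed p T T' →
    Relation.TransGen
      (fun A B : ∀ i, Finset (S i) => StrictRed p A B ∧ (∑ i, (A i \ B i).card) = 1) T T' := by
  intro N
  induction N with
  | zero =>
    intro T T' hle h
    exact absurd (lt_of_lt_of_le (red_sum_lt p h) hle) (Nat.not_lt_zero _)
  | succ N ihN =>
    intro T T' hle h
    have hex : ∃ i, ∃ s ∈ T i, s ∉ T' i := by
      by_contra hc
      push_neg at hc
      refine h.1 (funext fun i => ?_)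
      exact Finset.Subset.antisymm (fun s hs => hc i s hs) (h.2.1 i)
    obtain ⟨i, s, hsT, hsT'⟩ := hex
    set U : ∀ j, Finset (S j) := Function.update T i ((T i).erase s) with hU
    have hUi : U i = (T i).erase s := Function.update_self i _ T
    have hUj : ∀ j, j ≠ i → U j = T j := fun j hj => Function.update_of_ne hj _ T
    have hUsub : ∀ j, U j ⊆ T j := by
      intro j
      by_cases hj : j = i
      · subst hj; rw [hUi]; exact Finset.erase_subset _ _
      · rw [hUj j hj]
    have hTU_ne : T ≠ U := by
      intro hEq
      have : s ∈ U i := hEq ▸ hsT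
      rw [hUi] at this
      exact (Finset.mem_erase.1 this).1 rfl
    have hT'U : ∀ j, T' j ⊆ U j := by
      intro j
      by_cases hj : j = i
      · subst hj; rw [hUi]; exact Finset.subset_erase.2 ⟨h.2.1 j, hsT'⟩
      · rw [hUj j hj]; exact h.2.1 j
    have hstep : StrictRed p T U ∧ (∑ j, (T j \ U j).card) = 1 := by
      constructor
      · refine ⟨hTU_ne, hUsub, ?_⟩
        intro j t htT htU
        have hji : j = i := by
          by_contra hj
          rw [hUj j hj] at htU
          exact htU htT
        subst hji
        rw [hUi] at htU
        have hts : t = s := by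
          by_contra hts
          exact htU (Finset.mem_erase.2 ⟨hts, htT⟩)
        subst hts
        obtain ⟨s', hs'T', hdom⟩ := h.2.2 j t htT hsT'
        refine ⟨s', ?_, hdom⟩
        rw [hUi]
        refine Finset.mem_erase.2 ⟨?_, h.2.1 j hs'T'⟩
        intro hEq
        exact hsT' (hEq ▸ hs'T')
      · rw [Finset.sum_eq_single i]
        · rw [hUi]
          have : T i \ (T i).erase s = {s} := by
            ext x
            simp only [Finset.mem_sdiff, Finset.mem_erase, Finset.mem_singleton]
            constructor
            · rintro ⟨hx, hx'⟩
              by_contra hxs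
              exact hx' ⟨hxs, hx⟩
            · rintro rfl
              exact ⟨hsT, fun hc => hc.1 rfl⟩
          rw [this, Finset.card_singleton]
        · intro j _ hj
          rw [hUj j hj, Finset.sdiff_self, Finset.card_empty]
        · intro hc
          exact absurd (Finset.mem_univ i) hc
    by_cases hUT' : U = T'
    · exact Relation.TransGen.single (hUT' ▸ hstep)
    · have hred : StrictRed p U T' := by
        refine ⟨hUT', hT'U, ?_⟩
        intro j t htU htT'
        obtain ⟨t', ht'T', hdom⟩ := h.2.2 j t (hUsub j htU) htT'
        exact ⟨t', ht'T', strictDom_mono p hUsub hdom⟩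
      have hleU : (∑ j, (U j).card) ≤ N := by
        have := red_sum_lt p hstep.1; omega
      exact Relation.TransGen.head hstep (ihN U T' hleU hred)

end Aux

/-- Strict Elimination: `⇒_S` has the unique normal form property, and its transitive
closure equals that of the one-strategy-at-a-time relation `⇒_{1,S}`. -/
theorem strict_elimination {n : ℕ} {S : Fin n → Type*}
    [∀ i, Fintype (S i)] [∀ i, DecidableEq (S i)]
    (p : Fin n → (∀ i, S i) → ℝ) :
    (∀ T : ∀ i, Finset (S i), (∀ i, (T i).Nonempty) →
      ∃! T' : ∀ i, Finset (S i),
        Relation.ReflTransGen (StrictRed p) T T' ∧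
        ∀ T'' : ∀ i, Finset (S i), ¬ StrictRed p T' T'') ∧
    Relation.TransGen
        (fun T T' : ∀ i, Finset (S i) => StrictRed p T T' ∧ (∑ i, (T i \ T' i).card) = 1) =
      Relation.TransGen (StrictRed p) := by
  constructor
  · intro T hne
    obtain ⟨T', hTT', hnf⟩ := exists_nf p (∑ i, (T i).card) T le_rfl
    refine ⟨T', ⟨hTT', hnf⟩, ?_⟩
    rintro T'' ⟨hTT'', hnf''⟩
    obtain ⟨W, hW1, hW2⟩ :=
      confluence p (∑ i, (T i).card) T T'' T' hne le_rfl hTT'' hTT'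
    rw [nf_rtg_eq p hnf'' hW1, nf_rtg_eq p hnf hW2]
  · funext T T'
    apply propext
    constructor
    · intro h
      exact Relation.TransGen.mono (fun A B hab => hab.1) _ _ h
    · intro h
      induction h with
      | single hstep => exact step_transgen p _ _ _ le_rfl hstep
      | tail _ hstep ih =>
        exact Relation.TransGen.trans ih (step_transgen p _ _ _ le_rfl hstep)
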